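/- arXiv:1711.01709 — 3 statements merged into one kernel-verified Lean document; each statement's English description precedes it below -/
import Mathlib

section
/- If m, n, r are positive integers and s is a real number (or integer) with s ≥ n/((1+1/m)^{1/r} − 1), then ∏_{ℓ=1}^{r} (1 + n/(s+ℓ)) ≤ 1 + 1/m, and hence (m+1)·C(n+s', s') ≥ m·C(n+r+s', r+s') for every integer s' ≥ s. -/
open scoped BigOperators

lemma choose_prod_aux (n s' : ℕ) : ∀ r : ℕ,
    ((n + r + s').choose (r + s') : ℝ) =
      ((n + s').choose s' : ℝ) * ∏ ℓ ∈ Finset.Icc 1 r, (((n : ℝ) + s' + ℓ) / ((s' : ℝ) + ℓ))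
  | 0 => by simp
  | (r + 1) => by
      rw [Finset.prod_Icc_succ_top (by omega : 1 ≤ r + 1), ← mul_assoc,
        ← choose_prod_aux n s' r]
      have e1 : n + (r + 1) + s' = (n + r + s') + 1 := by omega
      have e2 : (r + 1) + s' = (r + s') + 1 := by omega
      rw [e1, e2]
      have hD : (0 : ℝ) < (s' : ℝ) + ((r : ℝ) + 1) := by positivity
      have h := Nat.add_one_mul_choose_eq (n + r + s') (r + s')
      have h' : ((n + r + s' + 1 : ℕ) : ℝ) * ((n + r + s').choose (r + s') : ℝ)
          = (((n + r + s') + 1).choose ((r + s') + 1) : ℝ) * ((r + s' + 1 : ℕ) : ℝ) := by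
        exact_mod_cast congrArg (Nat.cast : ℕ → ℝ) h
      push_cast
      rw [← mul_div_assoc, eq_div_iff hD.ne']
      push_cast at h'
      nlinarith [h']

/-- if `s ≥ n/((1+1/m)^(1/r) − 1)` then `∏_{ℓ=1}^r (1+n/(s+ℓ)) ≤ 1+1/m`,
and `(m+1)·C(n+s',s') ≥ m·C(n+r+s',r+s')` for every integer `s' ≥ s`. -/
theorem stmt2 (m n r : ℕ) (hm : 0 < m) (hn : 0 < n) (hr : 0 < r) (s : ℝ)
    (hs : s ≥ (n : ℝ) / ((1 + 1 / (m : ℝ)) ^ ((1 : ℝ) / r) - 1)) :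
    (∏ ℓ ∈ Finset.Icc 1 r, (1 + (n : ℝ) / (s + ℓ))) ≤ 1 + 1 / (m : ℝ) ∧
      ∀ s' : ℕ, s ≤ (s' : ℝ) →
        ((m + 1 : ℝ) * Nat.choose (n + s') s' ≥ (m : ℝ) * Nat.choose (n + r + s') (r + s')) := by
  have hm' : (0 : ℝ) < m := by exact_mod_cast hm
  have hn' : (0 : ℝ) < n := by exact_mod_cast hn
  have hr' : (0 : ℝ) < r := by exact_mod_cast hr
  set t : ℝ := (1 + 1 / (m : ℝ)) ^ ((1 : ℝ) / r) with ht
  have hbase : (1 : ℝ) < 1 + 1 / m := by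
    have : (0 : ℝ) < 1 / m := by positivity
    linarith
  have ht1 : 1 < t := by
    rw [ht]
    exact Real.one_lt_rpow_iff_of_pos (by linarith) |>.mpr (Or.inl ⟨hbase, by positivity⟩)
  have htr : t ^ r = 1 + 1 / (m : ℝ) := by
    rw [ht, ← Real.rpow_natCast (_ ^ _) r, ← Real.rpow_mul (by linarith),
      one_div_mul_cancel (by positivity : (r : ℝ) ≠ 0), Real.rpow_one]
  have hc : (0 : ℝ) < t - 1 := by linarith
  have hsn : (n : ℝ) / (t - 1) ≤ s := hs
  have hspos : 0 < s := lt_of_lt_of_le (by positivity) hsn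
  have hkey : (n : ℝ) ≤ s * (t - 1) := (div_le_iff₀ hc).mp hsn
  -- each factor bound
  have hfac : ∀ ℓ ∈ Finset.Icc 1 r, (1 + (n : ℝ) / (s + ℓ)) ≤ t := by
    intro ℓ hℓ
    have hℓ1 : 1 ≤ ℓ := (Finset.mem_Icc.mp hℓ).1
    have hℓ' : (1 : ℝ) ≤ ℓ := by exact_mod_cast hℓ1
    have hsl : 0 < s + ℓ := by linarith
    have : (n : ℝ) / (s + ℓ) ≤ t - 1 := by
      rw [div_le_iff₀ hsl]
      nlinarith
    linarith
  have hprod1 : (∏ ℓ ∈ Finset.Icc 1 r, (1 + (n : ℝ) / (s + ℓ))) ≤ 1 + 1 / (m : ℝ) := by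
    calc (∏ ℓ ∈ Finset.Icc 1 r, (1 + (n : ℝ) / (s + ℓ)))
        ≤ ∏ _ℓ ∈ Finset.Icc 1 r, t := by
          apply Finset.prod_le_prod
          · intro ℓ hℓ
            have hℓ1 : 1 ≤ ℓ := (Finset.mem_Icc.mp hℓ).1
            have hℓ' : (1 : ℝ) ≤ ℓ := by exact_mod_cast hℓ1
            positivity
          · exact hfac
      _ = t ^ r := by rw [Finset.prod_const, Nat.card_Icc]; norm_num
      _ = 1 + 1 / (m : ℝ) := htr
  refine ⟨hprod1, ?_⟩
  intro s' hss'
  have hprod2 : (∏ ℓ ∈ Finset.Icc 1 r, (1 + (n : ℝ) / ((s' : ℝ) + ℓ))) ≤ 1 + 1 / (m : ℝ) := by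
    refine le_trans ?_ hprod1
    apply Finset.prod_le_prod
    · intro ℓ hℓ
      have hℓ1 : 1 ≤ ℓ := (Finset.mem_Icc.mp hℓ).1
      have hℓ' : (1 : ℝ) ≤ ℓ := by exact_mod_cast hℓ1
      positivity
    · intro ℓ hℓ
      have hℓ1 : 1 ≤ ℓ := (Finset.mem_Icc.mp hℓ).1
      have hℓ' : (1 : ℝ) ≤ ℓ := by exact_mod_cast hℓ1
      have h1 : 0 < s + ℓ := by linarith
      have h2 : 0 < (s' : ℝ) + ℓ := by linarith
      have : (n : ℝ) / ((s' : ℝ) + ℓ) ≤ (n : ℝ) / (s + ℓ) :=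
        div_le_div_of_nonneg_left hn'.le h1 (by linarith)
      linarith
  have hident := choose_prod_aux n s' r
  have hprodeq : (∏ ℓ ∈ Finset.Icc 1 r, (((n : ℝ) + s' + ℓ) / ((s' : ℝ) + ℓ)))
      = ∏ ℓ ∈ Finset.Icc 1 r, (1 + (n : ℝ) / ((s' : ℝ) + ℓ)) := by
    apply Finset.prod_congr rfl
    intro ℓ hℓ
    have hℓ1 : 1 ≤ ℓ := (Finset.mem_Icc.mp hℓ).1
    have hℓ' : (1 : ℝ) ≤ ℓ := by exact_mod_cast hℓ1
    have h2 : (0 : ℝ) < (s' : ℝ) + ℓ := by positivity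
    field_simp
    ring
  rw [hprodeq] at hident
  have hch : (0 : ℝ) ≤ ((n + s').choose s' : ℝ) := by positivity
  have : (m : ℝ) * ((n + r + s').choose (r + s') : ℝ)
      ≤ (m : ℝ) * (((n + s').choose s' : ℝ) * (1 + 1 / (m : ℝ))) := by
    rw [hident]
    apply mul_le_mul_of_nonneg_left _ hm'.le
    exact mul_le_mul_of_nonneg_left hprod2 hch
  have hmm : (m : ℝ) * (1 + 1 / (m : ℝ)) = m + 1 := by field_simp
  calc (m : ℝ) * ((n + r + s').choose (r + s') : ℝ)
      ≤ (m : ℝ) * (((n + s').choose s' : ℝ) * (1 + 1 / (m : ℝ))) := this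
    _ = ((m : ℝ) + 1) * ((n + s').choose s' : ℝ) := by rw [← hmm]; ring
end

section
/- Let n ≥ 1, s_n = n(n+1)/2, and let f : ℝⁿ → ℝ^{n+s_n} be the free map f(x) = (x¹,…,xⁿ, xᵅxᵝ for α ≤ β). Let π : ℝ^{n+s_n} → ℝ^{n+s_n−1} be the projection that drops one fixed coordinate of index greater than n. Then π ∘ f has full 2-rank: at every point the matrix of its first and second partial derivatives has rank n + s_n − 1. -/
open scoped BigOperators

section stmt5helpers
variable {n : ℕ} {J : Type*} [Fintype J] (q1 q2 : J → Fin n)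

private def Gmap : (Fin n → ℝ) → (Fin n ⊕ J) → ℝ :=
  fun y => Sum.elim (fun α => y α) (fun p => y (q1 p) * y (q2 p))

omit [Fintype J] in
private lemma Gmap_diff (y : Fin n → ℝ) :
    ∀ i : Fin n ⊕ J, DifferentiableAt ℝ (fun y : Fin n → ℝ => Gmap q1 q2 y i) y := by
  rintro (α | p)
  · exact differentiable_apply α y
  · exact (differentiable_apply (q1 p) y).mul (differentiable_apply (q2 p) y)

private lemma fderiv_Gmap (y v : Fin n → ℝ) :
    fderiv ℝ (Gmap q1 q2) y v
      = Sum.elim (fun α => v α) (fun p => v (q1 p) * y (q2 p) + y (q1 p) * v (q2 p)) := by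
  have h := fderiv_pi (𝕜 := ℝ) (φ := fun i (y : Fin n → ℝ) => Gmap q1 q2 y i) (Gmap_diff q1 q2 y)
  have he : (fun (y : Fin n → ℝ) (i : Fin n ⊕ J) => Gmap q1 q2 y i) = Gmap q1 q2 := rfl
  rw [he] at h
  rw [h]
  funext i
  rw [ContinuousLinearMap.pi_apply]
  rcases i with α | p
  · exact congrFun (congrArg _ (hasFDerivAt_apply α y).fderiv) v
  · show fderiv ℝ (fun y => y (q1 p) * y (q2 p)) y v = _
    rw [fderiv_fun_mul (differentiable_apply (q1 p) y) (differentiable_apply (q2 p) y)]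
    simp [(hasFDerivAt_apply (q1 p) y).fderiv, (hasFDerivAt_apply (q2 p) y).fderiv]
    ring

private lemma fderiv2_Gmap (x : Fin n → ℝ) (a b : Fin n) :
    fderiv ℝ (fun y => fderiv ℝ (Gmap q1 q2) y (Pi.single a 1)) x (Pi.single b 1)
      = Sum.elim (fun _ : Fin n => (0:ℝ))
          (fun p => (Pi.single a 1 : Fin n → ℝ) (q1 p) * (Pi.single b 1 : Fin n → ℝ) (q2 p)
              + (Pi.single b 1 : Fin n → ℝ) (q1 p) * (Pi.single a 1 : Fin n → ℝ) (q2 p)) := by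
  have hF : (fun y => fderiv ℝ (Gmap q1 q2) y (Pi.single a 1))
      = fun y => Sum.elim (fun α => (Pi.single a 1 : Fin n → ℝ) α)
          (fun p : J => (Pi.single a 1 : Fin n → ℝ) (q1 p) * y (q2 p) + y (q1 p) * (Pi.single a 1 : Fin n → ℝ) (q2 p)) := by
    funext y; exact fderiv_Gmap q1 q2 y (Pi.single a 1)
  rw [hF]
  have hd : ∀ i : Fin n ⊕ J, DifferentiableAt ℝ
      (fun y : Fin n → ℝ => Sum.elim (fun α => (Pi.single a 1 : Fin n → ℝ) α)
        (fun p : J => (Pi.single a 1 : Fin n → ℝ) (q1 p) * y (q2 p) + y (q1 p) * (Pi.single a 1 : Fin n → ℝ) (q2 p)) i) x := by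
    rintro (α | p)
    · exact differentiableAt_const _
    · exact (((differentiable_apply (q2 p)) x).const_mul _).add
        (((differentiable_apply (q1 p)) x).mul_const _)
  have h := fderiv_pi (𝕜 := ℝ)
    (φ := fun (i : Fin n ⊕ J) (y : Fin n → ℝ) => Sum.elim (fun α => (Pi.single a 1 : Fin n → ℝ) α)
        (fun p : J => (Pi.single a 1 : Fin n → ℝ) (q1 p) * y (q2 p) + y (q1 p) * (Pi.single a 1 : Fin n → ℝ) (q2 p)) i) hd
  rw [h]
  funext i
  rw [ContinuousLinearMap.pi_apply]
  rcases i with α | p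
  · simp
  · show fderiv ℝ (fun y => (Pi.single a 1 : Fin n → ℝ) (q1 p) * y (q2 p) + y (q1 p) * (Pi.single a 1 : Fin n → ℝ) (q2 p)) x
        (Pi.single b 1) = _
    rw [fderiv_fun_add (((differentiable_apply (q2 p)) x).const_mul _)
        (((differentiable_apply (q1 p)) x).mul_const _),
      fderiv_const_mul ((differentiable_apply (q2 p)) x),
      fderiv_mul_const ((differentiable_apply (q1 p)) x)]
    simp [(hasFDerivAt_apply (q2 p) x).fderiv, (hasFDerivAt_apply (q1 p) x).fderiv]
    ring
end stmt5helpers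

/-- dropping one quadratic coordinate (of index > n) from the free map
`f(x) = (x^α ; x^α x^β, α ≤ β)` yields a map `ℝⁿ → ℝ^{n+s_n−1}` of full 2-rank: at
every point its first and second partial derivative vectors span the whole target. -/
theorem stmt5 (n : ℕ) (hn : 1 ≤ n)
    (p₀ : {p : Fin n × Fin n // p.1 ≤ p.2})
    (g : (Fin n → ℝ) →
      (Fin n ⊕ {p : {p : Fin n × Fin n // p.1 ≤ p.2} // p ≠ p₀}) → ℝ)
    (hg : g = fun x => Sum.elim (fun α => x α) (fun p => x p.1.1.1 * x p.1.1.2))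
    (x : Fin n → ℝ) :
    Submodule.span ℝ
        (Set.range (Sum.elim
          (fun α : Fin n => fderiv ℝ g x (Pi.single α 1))
          (fun p : {p : Fin n × Fin n // p.1 ≤ p.2} =>
            fderiv ℝ (fun y => fderiv ℝ g y (Pi.single p.1.1 1)) x (Pi.single p.1.2 1)))) = ⊤ := by
  classical
  subst hg
  set J := {p : {p : Fin n × Fin n // p.1 ≤ p.2} // p ≠ p₀} with hJdef
  have hgG : (fun x : Fin n → ℝ => Sum.elim (fun α => x α)
      (fun p : J => x p.1.1.1 * x p.1.1.2))
      = Gmap (fun p : J => p.1.1.1) (fun p : J => p.1.1.2) := rfl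
  rw [hgG]
  set q1 : J → Fin n := fun p => p.1.1.1 with hq1
  set q2 : J → Fin n := fun p => p.1.1.2 with hq2
  set S : Set ((Fin n ⊕ J) → ℝ) := Set.range (Sum.elim
          (fun α : Fin n => fderiv ℝ (Gmap q1 q2) x (Pi.single α 1))
          (fun p : {p : Fin n × Fin n // p.1 ≤ p.2} =>
            fderiv ℝ (fun y => fderiv ℝ (Gmap q1 q2) y (Pi.single p.1.1 1)) x
              (Pi.single p.1.2 1))) with hSdef
  -- Step 1: each `Pi.single (Sum.inr q) 1` lies in the span.
  have step1 : ∀ q : J, (Pi.single (Sum.inr q) 1 : (Fin n ⊕ J) → ℝ) ∈ Submodule.span ℝ S := by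
    intro q
    set c : ℝ := if q.1.1.1 = q.1.1.2 then 2 else 1 with hc
    have hc0 : c ≠ 0 := by rw [hc]; split <;> norm_num
    have hTmem : fderiv ℝ (fun y => fderiv ℝ (Gmap q1 q2) y (Pi.single q.1.1.1 1)) x
        (Pi.single q.1.1.2 1) ∈ S := ⟨Sum.inr q.1, rfl⟩
    have hTval : fderiv ℝ (fun y => fderiv ℝ (Gmap q1 q2) y (Pi.single q.1.1.1 1)) x
        (Pi.single q.1.1.2 1) = c • (Pi.single (Sum.inr q) 1 : (Fin n ⊕ J) → ℝ) := by
      rw [fderiv2_Gmap]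
      funext i
      rcases i with α | r
      · simp
      · show (Pi.single q.1.1.1 1 : Fin n → ℝ) (q1 r) * (Pi.single q.1.1.2 1 : Fin n → ℝ) (q2 r)
            + (Pi.single q.1.1.2 1 : Fin n → ℝ) (q1 r) * (Pi.single q.1.1.1 1 : Fin n → ℝ) (q2 r)
            = (c • (Pi.single (Sum.inr q) 1 : (Fin n ⊕ J) → ℝ)) (Sum.inr r)
        have hr : q1 r ≤ q2 r := r.1.2
        have hq : q.1.1.1 ≤ q.1.1.2 := q.1.2
        by_cases hrq : r = q
        · subst hrq
          simp only [Pi.smul_apply, Pi.single_eq_same, smul_eq_mul, mul_one, hc]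
          by_cases hd : q1 r = q2 r
          · rw [if_pos hd]
            simp [hq1, hq2, Pi.single_apply, hd] at hd ⊢
            try simp [hd]
            try norm_num
          · rw [if_neg hd]
            simp only [hq1, hq2] at hd
            simp [hq1, hq2, Pi.single_apply, hd, Ne.symm hd]
        · have hne : (Sum.inr r : Fin n ⊕ J) ≠ Sum.inr q := by
            simp [hrq]
          rw [Pi.smul_apply, Pi.single_eq_of_ne hne, smul_zero]
          have h1 : ¬ (q1 r = q.1.1.1 ∧ q2 r = q.1.1.2) := by
            rintro ⟨h1, h2⟩
            exact hrq (Subtype.ext (Subtype.ext (Prod.ext h1 h2)))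
          have h2 : ¬ (q1 r = q.1.1.2 ∧ q2 r = q.1.1.1) := by
            rintro ⟨h1, h2⟩
            have hab : q.1.1.1 = q.1.1.2 := le_antisymm hq (by rw [← h2, ← h1]; exact hr)
            exact hrq (Subtype.ext (Subtype.ext (Prod.ext (h1.trans hab.symm) (h2.trans hab))))
          simp only [Pi.single_apply]
          have e1 : (if q1 r = q.1.1.1 then (1:ℝ) else 0)
              * (if q2 r = q.1.1.2 then (1:ℝ) else 0) = 0 := by
            by_cases ha : q1 r = q.1.1.1
            · by_cases hb : q2 r = q.1.1.2
              · exact absurd ⟨ha, hb⟩ h1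
              · rw [if_neg hb, mul_zero]
            · rw [if_neg ha, zero_mul]
          have e2 : (if q1 r = q.1.1.2 then (1:ℝ) else 0)
              * (if q2 r = q.1.1.1 then (1:ℝ) else 0) = 0 := by
            by_cases ha : q1 r = q.1.1.2
            · by_cases hb : q2 r = q.1.1.1
              · exact absurd ⟨ha, hb⟩ h2
              · rw [if_neg hb, mul_zero]
            · rw [if_neg ha, zero_mul]
          rw [e1, e2, add_zero]
    have := Submodule.smul_mem (Submodule.span ℝ S) c⁻¹ (Submodule.subset_span hTmem)
    rw [hTval, smul_smul, inv_mul_cancel₀ hc0, one_smul] at this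
    exact this
  -- Step 2: vectors supported on `Sum.inr` coordinates lie in the span.
  have step2 : ∀ w : (Fin n ⊕ J) → ℝ, (∀ β, w (Sum.inl β) = 0) →
      w ∈ Submodule.span ℝ S := by
    intro w hw
    have hrep : w = ∑ i, Pi.single i (w i) := (Finset.univ_sum_single w).symm
    rw [hrep]
    refine Submodule.sum_mem _ ?_
    rintro (β | q) -
    · rw [hw β, Pi.single_zero]
      exact Submodule.zero_mem _
    · have hone : (Pi.single (Sum.inr q) (w (Sum.inr q)) : (Fin n ⊕ J) → ℝ)
          = w (Sum.inr q) • (Pi.single (Sum.inr q) 1 : (Fin n ⊕ J) → ℝ) := by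
        funext j
        by_cases h : j = Sum.inr q <;> simp [Pi.single_apply, h]
      rw [hone]
      exact Submodule.smul_mem _ _ (step1 q)
  -- Step 3: each `Pi.single (Sum.inl α) 1` lies in the span.
  have step3 : ∀ α : Fin n, (Pi.single (Sum.inl α) 1 : (Fin n ⊕ J) → ℝ)
      ∈ Submodule.span ℝ S := by
    intro α
    have hD : fderiv ℝ (Gmap q1 q2) x (Pi.single α 1) ∈ S := ⟨Sum.inl α, rfl⟩
    have hw : ∀ β, (fderiv ℝ (Gmap q1 q2) x (Pi.single α 1)
        - (Pi.single (Sum.inl α) 1 : (Fin n ⊕ J) → ℝ)) (Sum.inl β) = 0 := by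
      intro β
      rw [Pi.sub_apply, fderiv_Gmap]
      show (Pi.single α 1 : Fin n → ℝ) β
          - (Pi.single (Sum.inl α) 1 : (Fin n ⊕ J) → ℝ) (Sum.inl β) = 0
      simp [Pi.single_apply]
    have hmem := Submodule.sub_mem _ (Submodule.subset_span hD) (step2 _ hw)
    simpa using hmem
  -- Conclusion
  rw [eq_top_iff]
  rintro v -
  have hrep : v = ∑ i, Pi.single i (v i) := (Finset.univ_sum_single v).symm
  rw [hrep]
  refine Submodule.sum_mem _ ?_
  rintro i -
  have hone : (Pi.single i (v i) : (Fin n ⊕ J) → ℝ)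
      = v i • (Pi.single i 1 : (Fin n ⊕ J) → ℝ) := by
    funext j
    by_cases h : j = i <;> simp [Pi.single_apply, h]
  rw [hone]
  rcases i with β | q
  · exact Submodule.smul_mem _ _ (step3 β)
  · exact Submodule.smul_mem _ _ (step1 q)
end

section
/- For n ≥ 2, let m_n be the middle (real) root of the cubic equation in m: n + s_n − m = m(m+1)(n+1) − m·s_m, where s_k = k(k+1)/2. Then m_n ≤ √(n/2) ≤ m_n + 1/2. -/
set_option maxHeartbeats 1000000 in
/-- if `m` is the middle real root of the cubic
`n + s_n − m = m(m+1)(n+1) − m·s_m` (with `s_t = t(t+1)/2`), i.e. a root having both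
a smaller and a larger root, then `m ≤ √(n/2) ≤ m + 1/2` (for `n ≥ 2`). -/
theorem stmt14 (n : ℕ) (hn : 2 ≤ n) (m : ℝ)
    (hroot : (n : ℝ) + n * (n + 1) / 2 - m = m * (m + 1) * (n + 1) - m * (m * (m + 1) / 2))
    (hsmaller : ∃ x < m,
      (n : ℝ) + n * (n + 1) / 2 - x = x * (x + 1) * (n + 1) - x * (x * (x + 1) / 2))
    (hlarger : ∃ y > m,
      (n : ℝ) + n * (n + 1) / 2 - y = y * (y + 1) * (n + 1) - y * (y * (y + 1) / 2)) :
    m ≤ Real.sqrt (n / 2) ∧ Real.sqrt (n / 2) ≤ m + 1 / 2 := by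
  obtain ⟨x, hxm, hx⟩ := hsmaller
  obtain ⟨y, hmy, hy⟩ := hlarger
  set N : ℝ := (n : ℝ) with hN
  have hN2 : (2:ℝ) ≤ N := by rw [hN]; exact_mod_cast hn
  have hxy : x < y := hxm.trans hmy
  -- Vieta
  have P1 : x^2 + x*m + m^2 - (2*N+1)*(x+m) - (2*N+4) = 0 := by
    have h1 : (x - m) * (x^2 + x*m + m^2 - (2*N+1)*(x+m) - (2*N+4)) = 0 := by
      linear_combination (2:ℝ) * hx - 2 * hroot
    rcases mul_eq_zero.mp h1 with h | h
    · exact absurd (sub_eq_zero.mp h) (ne_of_lt hxm)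
    · exact h
  have P2 : m^2 + m*y + y^2 - (2*N+1)*(m+y) - (2*N+4) = 0 := by
    have h1 : (m - y) * (m^2 + m*y + y^2 - (2*N+1)*(m+y) - (2*N+4)) = 0 := by
      linear_combination (2:ℝ) * hroot - 2 * hy
    rcases mul_eq_zero.mp h1 with h | h
    · exact absurd (sub_eq_zero.mp h) (ne_of_lt hmy)
    · exact h
  have S1 : x + m + y = 2*N+1 := by
    have h1 : (x - y) * (x + m + y - (2*N+1)) = 0 := by
      linear_combination P1 - P2
    rcases mul_eq_zero.mp h1 with h | h
    · exact absurd (sub_eq_zero.mp h) (ne_of_lt hxy)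
    · linarith [sub_eq_zero.mp h]
  have E2 : x*m + m*y + x*y = -(2*N+4) := by
    linear_combination (x+m)*S1 - P1
  have E3 : x*m*y = -(N^2+3*N) := by
    linear_combination 2*hx + x*E2 - x^2*S1
  have hy0 : (0:ℝ) < y := by nlinarith [S1, hxm, hmy]
  have hx0 : x < 0 := by
    by_contra hcon
    push_neg at hcon
    have hm0 : 0 < m := lt_of_le_of_lt hcon hxm
    have : 0 ≤ x*m*y := mul_nonneg (mul_nonneg hcon hm0.le) hy0.le
    nlinarith [E3]
  set a : ℝ := Real.sqrt (N/2) with ha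
  have ha0 : 0 ≤ a := Real.sqrt_nonneg _
  have ha2 : a^2 = N/2 := Real.sq_sqrt (by linarith)
  have ha1 : 1 ≤ a := by nlinarith [ha2, ha0, hN2]
  have haN : a ≤ N/2 := by
    have : a*1 ≤ a*a := mul_le_mul_of_nonneg_left ha1 ha0
    nlinarith [ha2, this]
  -- first bound : m ≤ a
  have hfa : (a-x)*(a-m)*(a-y) = a^3 - (2*N+1)*a^2 - (2*N+4)*a + N^2+3*N := by
    linear_combination (-(a^2))*S1 + a*E2 - E3
  have hha : a^3 - (2*N+1)*a^2 - (2*N+4)*a + N^2+3*N ≤ 0 := by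
    have hNa : N = 2*a^2 := by linarith [ha2]
    have key : 5*N ≤ a*(3*N+8) := by
      rw [hNa]; nlinarith [mul_nonneg ha0 (sq_nonneg (6*a-5))]
    have ha3 : a^3 = a*(N/2) := by
      calc a^3 = a * a^2 := by ring
      _ = a*(N/2) := by rw [ha2]
    nlinarith [key, ha3]
  have h1 : m ≤ a := by
    by_contra hcon
    push_neg at hcon
    have hax : 0 < a - x := by linarith
    have h2 : 0 < m - a := by linarith
    have h3 : 0 < y - a := by linarith
    nlinarith [mul_pos (mul_pos hax h2) h3, hfa, hha]
  -- second bound : a - 1/2 ≤ m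
  set b : ℝ := a - 1/2 with hb
  have hy3 : 2*N+1 < 3*y := by linarith [S1]
  have haU : a < (4*N+5)/6 := by nlinarith [ha2, hN2, ha0]
  have hby : b < y := by rw [hb]; linarith
  have hfb : (b-x)*(b-m)*(b-y) = b^3 - (2*N+1)*b^2 - (2*N+4)*b + N^2+3*N := by
    linear_combination (-(b^2))*S1 + b*E2 - E3
  have hhb : 0 ≤ b^3 - (2*N+1)*b^2 - (2*N+4)*b + N^2+3*N := by
    have ha3 : a^3 = a*(N/2) := by
      calc a^3 = a * a^2 := by ring
      _ = a*(N/2) := by rw [ha2]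
    -- h(b) = a*(N/2 - 9/4) + 9N/4 + 13/8
    have hval : b^3 - (2*N+1)*b^2 - (2*N+4)*b + N^2+3*N
        = a*(N/2 - 9/4) + 9*N/4 + 13/8 := by
      rw [hb]; linear_combination ha3 - (2*N + 5/2) * ha2
    rw [hval]
    have hp : 0 ≤ (a-1)*(N-2) := mul_nonneg (by linarith) (by linarith)
    nlinarith [ha1, haN, hN2, hp]
  have h2 : b ≤ m := by
    by_contra hcon
    push_neg at hcon
    have hbx : 0 < b - x := by linarith
    have hbm : 0 < b - m := by linarith
    have hyb : 0 < y - b := by linarith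
    nlinarith [mul_pos (mul_pos hbx hbm) hyb, hfb, hhb]
  constructor
  · exact h1
  · rw [hb] at h2; linarith
end
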